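/- The finitary Ramsey theorem restricted to min-dependent functions is equivalent to the parametrized Paris–Harrington principle: for fixed d and k, the statement 'for every F : Finset ℕ → ℕ satisfying min X = min Y → F(X) = F(Y), there exists R such that every k-coloring of d-element subsets of {0,...,R} has a homogeneous H with |H| > F(H)' holds if and only if 'for every f : ℕ → ℕ and every a there exists R such that every k-coloring of d-element subsets of {a,...,R} has a homogeneous H with |H| ≥ f(min H)'. -/
import Mathlib


/-- `H` is homogeneous for the colouring `C` of `d`-element finite sets:
`C` is constant on the `d`-element subsets of `H`. -/
def HomogF (k d : ℕ) (C : Finset ℕ → Fin k) (H : Finset ℕ) : Prop :=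
  ∃ c : Fin k, ∀ s : Finset ℕ, s ⊆ H → s.card = d → C s = c

/-- Homogeneity for a (possibly infinite) set `H ⊆ ℕ`. -/
def HomogS (k d : ℕ) (C : Finset ℕ → Fin k) (H : Set ℕ) : Prop :=
  ∃ c : Fin k, ∀ s : Finset ℕ, ↑s ⊆ H → s.card = d → C s = c

/-- `F` is asymptotically stable: on every increasing chain of finite sets
the value of `F` eventually stabilises. -/
def AsympStable (F : Finset ℕ → ℕ) : Prop :=
  ∀ X : ℕ → Finset ℕ, (∀ i, X i ⊆ X (i + 1)) →
    ∃ i, ∀ j, i ≤ j → F (X j) = F (X i)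

/-- `F` is min-dependent: its value depends only on the minimum of the set. -/
def MinDep (F : Finset ℕ → ℕ) : Prop :=
  ∀ X Y : Finset ℕ, X.min = Y.min → F X = F Y

theorem frt_md_iff_ph (d k : ℕ) (hd : 1 ≤ d) (hk : 1 ≤ k) :
    (∀ F : Finset ℕ → ℕ, MinDep F →
      ∃ R : ℕ, ∀ C : Finset ℕ → Fin k,
        ∃ H : Finset ℕ, H ⊆ Finset.range (R + 1) ∧ HomogF k d C H ∧ F H < H.card) ↔
    (∀ f : ℕ → ℕ, ∀ a : ℕ,
      ∃ R : ℕ, ∀ C : Finset ℕ → Fin k,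
        ∃ H : Finset ℕ, ↑H ⊆ Finset.Icc a R ∧ HomogF k d C H ∧
          ∃ hH : H.Nonempty, f (H.min' hH) ≤ H.card) := by

  constructor
  · intro FRT f a
    obtain ⟨R, hR⟩ := FRT (fun X => WithBot.recBotCoe 0 (fun m => f (m + a)) X.min)
      (by intro X Y h; simp only [h])
    refine ⟨R + a, fun C => ?_⟩
    obtain ⟨H, hsub, ⟨c, hc⟩, hlt⟩ := hR (fun s => C (s.image (· + a)))
    have hne : H.Nonempty := by
      rcases H.eq_empty_or_nonempty with h | h
      · subst h; exact absurd hlt (by simp)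
      · exact h
    have hmin : H.min = (H.min' hne : WithBot ℕ) := (Finset.coe_min' hne).symm
    have hinj : Function.Injective (· + a) := add_left_injective a
    have hne' : (H.image (· + a)).Nonempty := hne.image _
    refine ⟨H.image (· + a), ?_, ⟨c, ?_⟩, hne', ?_⟩
    · intro x hx
      simp at hx
      obtain ⟨h, hh, rfl⟩ := hx
      have := hsub hh
      simp only [Finset.mem_range] at this
      simp
      omega
    · intro s hs hcard
      obtain ⟨t, ht, rfl⟩ := Finset.subset_image_iff.mp hs
      have : t.card = d := by rwa [Finset.card_image_of_injective _ hinj] at hcard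
      exact hc t ht this
    · have hmin' : (H.image (· + a)).min' hne' = H.min' hne + a := by
        apply le_antisymm
        · exact Finset.min'_le _ _ (Finset.mem_image_of_mem _ (H.min'_mem hne))
        · obtain ⟨h, hh, heq⟩ := Finset.mem_image.mp ((H.image (· + a)).min'_mem hne')
          rw [← heq]
          have := H.min'_le h hh
          omega
      rw [hmin', Finset.card_image_of_injective _ hinj]
      rw [hmin] at hlt
      exact le_of_lt hlt
  · intro PH F hF
    obtain ⟨R, hR⟩ := PH (fun n => F {n} + 1) 0
    refine ⟨R, fun C => ?_⟩
    obtain ⟨H, hsub, hhom, hne, hcard⟩ := hR C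
    refine ⟨H, ?_, hhom, ?_⟩
    · intro x hx
      have := hsub hx
      simp at this ⊢
      omega
    · have heq : F H = F {H.min' hne} := by
        apply hF
        rw [Finset.min_singleton, ← Finset.coe_min' hne]
      have h2 : F {H.min' hne} + 1 ≤ H.card := hcard
      omega
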